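/- For every parallelogram P ⊆ ℝ² there exists a rectangle T such that P ⊆ T ⊆ 3P, where 3P denotes the dilation of P by the factor 3 about the centre of P. -/

import Mathlib

open MeasureTheory Real Set
open scoped ENNReal

noncomputable section

/-- Rotation of the plane by angle `θ` about the origin. -/
def planeRot (θ : ℝ) (p : ℝ × ℝ) : ℝ × ℝ :=
  (Real.cos θ * p.1 - Real.sin θ * p.2, Real.sin θ * p.1 + Real.cos θ * p.2)

/-- The `C`-dilation of the interval `[a,b]` about its centre. -/
def dilInterval (C a b : ℝ) : Set ℝ :=
  Set.Icc ((a + b) / 2 - C * (b - a) / 2) ((a + b) / 2 + C * (b - a) / 2)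

/-- The `C`-dilation about its centre of the rectangle obtained by rotating the
axis-parallel closed rectangle `[a₁,b₁] × [a₂,b₂]` by the angle `θ`. -/
def rectD (C θ a₁ b₁ a₂ b₂ : ℝ) : Set (ℝ × ℝ) :=
  planeRot θ '' (dilInterval C a₁ b₁ ×ˢ dilInterval C a₂ b₂)

/-- A rectangle in the plane: the image of an axis-parallel closed rectangle under a rotation. -/
def IsRectangle (T : Set (ℝ × ℝ)) : Prop :=
  ∃ θ a₁ b₁ a₂ b₂ : ℝ, T = rectD 1 θ a₁ b₁ a₂ b₂

/-- The unit square `[-1,1]²`. -/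
def unitSq : Set (ℝ × ℝ) := Set.Icc (-1 : ℝ) 1 ×ˢ Set.Icc (-1 : ℝ) 1

/-- Fourier transform on `ℝ²`. -/
def FT2 (f : ℝ × ℝ → ℂ) (ξ : ℝ × ℝ) : ℂ :=
  ∫ x : ℝ × ℝ,
    Complex.exp ((((-2) * Real.pi * (x.1 * ξ.1 + x.2 * ξ.2) : ℝ) : ℂ) * Complex.I) * f x

/-- Inverse Fourier transform on `ℝ²`. -/
def FTInv2 (f : ℝ × ℝ → ℂ) (x : ℝ × ℝ) : ℂ :=
  ∫ ξ : ℝ × ℝ,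
    Complex.exp (((2 * Real.pi * (x.1 * ξ.1 + x.2 * ξ.2) : ℝ) : ℂ) * Complex.I) * f ξ

/-- Fourier restriction `R_S f` of `f : ℝ² → ℂ` to a set `S ⊆ ℝ²`. -/
def fres2 (f : ℝ × ℝ → ℂ) (S : Set (ℝ × ℝ)) : ℝ × ℝ → ℂ :=
  FTInv2 (S.indicator (FT2 f))

/-- Fourier transform on `ℝ³`. -/
def FT3 (f : ℝ × ℝ × ℝ → ℂ) (ξ : ℝ × ℝ × ℝ) : ℂ :=
  ∫ x : ℝ × ℝ × ℝ,
    Complex.exp ((((-2) * Real.pi * (x.1 * ξ.1 + x.2.1 * ξ.2.1 + x.2.2 * ξ.2.2) : ℝ) : ℂ)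
      * Complex.I) * f x

/-- Inverse Fourier transform on `ℝ³`. -/
def FTInv3 (f : ℝ × ℝ × ℝ → ℂ) (x : ℝ × ℝ × ℝ) : ℂ :=
  ∫ ξ : ℝ × ℝ × ℝ,
    Complex.exp (((2 * Real.pi * (x.1 * ξ.1 + x.2.1 * ξ.2.1 + x.2.2 * ξ.2.2) : ℝ) : ℂ)
      * Complex.I) * f ξ

/-- The vertical strip `S × ℝ ⊆ ℝ³` over a planar set `S`. -/
def vstrip (S : Set (ℝ × ℝ)) : Set (ℝ × ℝ × ℝ) := {p | (p.1, p.2.1) ∈ S}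

/-- Fourier restriction `R_B f` of `f : ℝ³ → ℂ` to a set `B ⊆ ℝ³`. -/
def fres3 (f : ℝ × ℝ × ℝ → ℂ) (B : Set (ℝ × ℝ × ℝ)) : ℝ × ℝ × ℝ → ℂ :=
  FTInv3 (B.indicator (FT3 f))

/-- `f_S` : Fourier restriction of `f : ℝ³ → ℂ` to the strip `S × ℝ`, `S ⊆ ℝ²`. -/
def fstrip (f : ℝ × ℝ × ℝ → ℂ) (S : Set (ℝ × ℝ)) : ℝ × ℝ × ℝ → ℂ :=
  fres3 f (vstrip S)

/-- The vertical `δ`-neighbourhood of the graph of `φ` above `A ⊆ ℝ²`. -/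
def Ngraph (φ : ℝ × ℝ → ℝ) (δ : ℝ) (A : Set (ℝ × ℝ)) : Set (ℝ × ℝ × ℝ) :=
  {p | (p.1, p.2.1) ∈ A ∧ |p.2.2 - φ (p.1, p.2.1)| < δ}

/-- `φ` is `δ`-flat over `S ⊆ ℝ²`. -/
def DeltaFlat (φ : ℝ × ℝ → ℝ) (δ : ℝ) (S : Set (ℝ × ℝ)) : Prop :=
  ∀ u ∈ S, ∀ v ∈ S, |φ v - φ u - fderiv ℝ φ u (v - u)| ≤ δ

/-- Evaluation of a bivariate polynomial at a point of the plane. -/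
def pev (P : MvPolynomial (Fin 2) ℝ) (p : ℝ × ℝ) : ℝ :=
  MvPolynomial.eval ![p.1, p.2] P

/-- Partial derivative in the first variable. -/
def Pdx (P : MvPolynomial (Fin 2) ℝ) : MvPolynomial (Fin 2) ℝ :=
  MvPolynomial.pderiv (0 : Fin 2) P

/-- Partial derivative in the second variable. -/
def Pdy (P : MvPolynomial (Fin 2) ℝ) : MvPolynomial (Fin 2) ℝ :=
  MvPolynomial.pderiv (1 : Fin 2) P

/-- The Hessian determinant `P_xx P_yy - P_xy²` of a bivariate polynomial. -/
def hessDet (P : MvPolynomial (Fin 2) ℝ) : MvPolynomial (Fin 2) ℝ :=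
  Pdx (Pdx P) * Pdy (Pdy P) - Pdy (Pdx P) ^ 2

/-- All coefficients of `P` are bounded in absolute value by `K`. -/
def CoeffBdd (P : MvPolynomial (Fin 2) ℝ) (K : ℝ) : Prop :=
  ∀ μ : Fin 2 →₀ ℕ, |MvPolynomial.coeff μ P| ≤ K

/-- A bivariate polynomial `φ` is `δ`-flat over `S ⊆ ℝ²`. -/
def PolyFlat (P : MvPolynomial (Fin 2) ℝ) (δ : ℝ) (S : Set (ℝ × ℝ)) : Prop :=
  ∀ u ∈ S, ∀ v ∈ S,
    |pev P v - pev P u - pev (Pdx P) u * (v.1 - u.1) - pev (Pdy P) u * (v.2 - u.2)| ≤ δ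

/-- A differentiable function `g : ℝ → ℝ` is `δ`-flat over an interval `I`. -/
def Flat1 (g : ℝ → ℝ) (δ : ℝ) (I : Set ℝ) : Prop :=
  ∀ x ∈ I, ∀ x₀ ∈ I, |g x - g x₀ - deriv g x₀ * (x - x₀)| ≤ δ


lemma dilInterval_one (a b : ℝ) : dilInterval 1 a b = Set.Icc a b := by
  unfold dilInterval
  rw [show (a+b)/2 - 1*(b-a)/2 = a by ring, show (a+b)/2 + 1*(b-a)/2 = b by ring]

/-- Inverse rotation in coordinates, where `(u.1/r, u.2/r) = (cos θ, sin θ)`. -/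
def rotInv (u : ℝ × ℝ) (r : ℝ) (w : ℝ × ℝ) : ℝ × ℝ :=
  ((u.1 * w.1 + u.2 * w.2) / r, (u.1 * w.2 - u.2 * w.1) / r)

lemma rotInv_add (u : ℝ × ℝ) (r : ℝ) (a b : ℝ × ℝ) :
    rotInv u r (a + b) = rotInv u r a + rotInv u r b := by
  simp only [rotInv, Prod.ext_iff, Prod.fst_add, Prod.snd_add]
  constructor <;> ring

lemma rotInv_smul (u : ℝ × ℝ) (r : ℝ) (s : ℝ) (w : ℝ × ℝ) :
    rotInv u r (s • w) = s • rotInv u r w := by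
  simp only [rotInv, Prod.ext_iff, Prod.smul_fst, Prod.smul_snd, smul_eq_mul]
  constructor <;> ring

lemma rotInv_u (u : ℝ × ℝ) (r : ℝ) (hr0 : r ≠ 0) (hr2 : r ^ 2 = u.1 ^ 2 + u.2 ^ 2) :
    rotInv u r u = (r, 0) := by
  simp only [rotInv, Prod.ext_iff]
  constructor
  · rw [show u.1 * u.1 + u.2 * u.2 = r ^ 2 by rw [hr2]; ring]
    field_simp
  · rw [show u.1 * u.2 - u.2 * u.1 = 0 by ring, zero_div]

lemma rot_rotInv (θ : ℝ) (u : ℝ × ℝ) (r : ℝ) (hr0 : r ≠ 0)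
    (hr2 : r ^ 2 = u.1 ^ 2 + u.2 ^ 2)
    (hcos : Real.cos θ = u.1 / r) (hsin : Real.sin θ = u.2 / r) (w : ℝ × ℝ) :
    planeRot θ (rotInv u r w) = w := by
  simp only [planeRot, rotInv, hcos, hsin, Prod.ext_iff]
  constructor
  · field_simp
    linear_combination (-w.1) * hr2
  · field_simp
    linear_combination (-w.2) * hr2

lemma rotInv_rot (θ : ℝ) (u : ℝ × ℝ) (r : ℝ) (hr0 : r ≠ 0)
    (hr2 : r ^ 2 = u.1 ^ 2 + u.2 ^ 2)
    (hcos : Real.cos θ = u.1 / r) (hsin : Real.sin θ = u.2 / r) (w : ℝ × ℝ) :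
    rotInv u r (planeRot θ w) = w := by
  simp only [planeRot, rotInv, hcos, hsin, Prod.ext_iff]
  constructor
  · field_simp
    linear_combination (-w.1) * hr2
  · field_simp
    linear_combination (-w.2) * hr2

lemma para_rect (c u v : ℝ × ℝ) (hu : u ≠ 0)
    (h : |v.1 * u.1 + v.2 * u.2| ≤ u.1 ^ 2 + u.2 ^ 2) :
    ∃ T : Set (ℝ × ℝ), IsRectangle T ∧
      (∀ s t : ℝ, s ∈ Icc (-1:ℝ) 1 → t ∈ Icc (-1:ℝ) 1 → c + s • u + t • v ∈ T) ∧
      (∀ p ∈ T, ∃ s ∈ Icc (-3:ℝ) 3, ∃ t ∈ Icc (-3:ℝ) 3, p = c + s • u + t • v) := by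
  have hz0 : (⟨u.1, u.2⟩ : ℂ) ≠ 0 := by
    intro hzz
    exact hu (Prod.ext (congrArg Complex.re hzz) (congrArg Complex.im hzz))
  set z : ℂ := ⟨u.1, u.2⟩ with hz
  set θ := Complex.arg z with hθ
  set r := ‖z‖ with hrdef
  have hr0 : 0 < r := norm_pos_iff.2 hz0
  have hrne : r ≠ 0 := ne_of_gt hr0
  have hcos : Real.cos θ = u.1 / r := by rw [hθ, Complex.cos_arg hz0]
  have hsin : Real.sin θ = u.2 / r := by rw [hθ, Complex.sin_arg]
  have hr2 : r ^ 2 = u.1 ^ 2 + u.2 ^ 2 := by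
    rw [hrdef, Complex.sq_norm, Complex.normSq_apply]; ring_nf; rfl
  clear_value r θ
  clear hz hθ hrdef hz0
  obtain ⟨v1, v2, hv⟩ : ∃ v1 v2, rotInv u r v = (v1, v2) := ⟨_, _, rfl⟩
  obtain ⟨c1, c2, hc⟩ : ∃ c1 c2, rotInv u r c = (c1, c2) := ⟨_, _, rfl⟩
  have hv1r : |v1| ≤ r := by
    have : v1 = (v.1 * u.1 + v.2 * u.2) / r := by
      have := congrArg Prod.fst hv
      simp only [rotInv] at this
      rw [← this]; ring_nf
    rw [this, abs_div, abs_of_pos hr0, div_le_iff₀ hr0]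
    calc |v.1 * u.1 + v.2 * u.2| ≤ u.1 ^ 2 + u.2 ^ 2 := h
      _ = r * r := by rw [← hr2]; ring
  set A : ℝ := r + |v1| with hA
  set B : ℝ := |v2| with hB
  refine ⟨rectD 1 θ (c1 - A) (c1 + A) (c2 - B) (c2 + B),
    ⟨θ, _, _, _, _, rfl⟩, ?_, ?_⟩
  · -- forward inclusion
    intro s t hs ht
    rw [rectD, dilInterval_one, dilInterval_one]
    refine ⟨rotInv u r (c + s • u + t • v), ?_,
      rot_rotInv θ u r hrne hr2 hcos hsin _⟩
    rw [rotInv_add, rotInv_add, rotInv_smul, rotInv_smul,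
      rotInv_u u r hrne hr2, hv, hc]
    have hs1 : |s| ≤ 1 := abs_le.2 ⟨hs.1, hs.2⟩
    have ht1 : |t| ≤ 1 := abs_le.2 ⟨ht.1, ht.2⟩
    constructor
    · simp only [mem_Icc, Prod.fst_add, Prod.smul_fst, smul_eq_mul]
      have h1 : |s * r + t * v1| ≤ A := by
        calc |s * r + t * v1| ≤ |s * r| + |t * v1| := abs_add_le _ _
          _ = |s| * r + |t| * |v1| := by rw [abs_mul, abs_mul, abs_of_pos hr0]
          _ ≤ 1 * r + 1 * |v1| :=
              add_le_add (mul_le_mul_of_nonneg_right hs1 hr0.le)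
                (mul_le_mul_of_nonneg_right ht1 (abs_nonneg _))
          _ = A := by rw [hA]; ring
      have h2 := abs_le.1 h1
      constructor <;> [linarith [h2.1]; linarith [h2.2]]
    · simp only [mem_Icc, Prod.snd_add, Prod.smul_snd, smul_eq_mul]
      have h1 : |s * 0 + t * v2| ≤ B := by
        rw [show s * 0 + t * v2 = t * v2 by ring, abs_mul, hB]
        calc |t| * |v2| ≤ 1 * |v2| := mul_le_mul_of_nonneg_right ht1 (abs_nonneg _)
          _ = |v2| := one_mul _
      have h2 := abs_le.1 h1
      constructor <;> [linarith [h2.1]; linarith [h2.2]]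
  · -- reverse inclusion
    intro p hp
    rw [rectD, dilInterval_one, dilInterval_one] at hp
    obtain ⟨q, ⟨hq1, hq2⟩, hqp⟩ := hp
    simp only [mem_Icc] at hq1 hq2
    have hxA : |q.1 - c1| ≤ A := abs_le.2 ⟨by linarith [hq1.1], by linarith [hq1.2]⟩
    have hyB : |q.2 - c2| ≤ B := abs_le.2 ⟨by linarith [hq2.1], by linarith [hq2.2]⟩
    set y : ℝ := q.2 - c2 with hy
    set x : ℝ := q.1 - c1 with hx
    set t : ℝ := y / v2 with ht
    have htv2 : t * v2 = y := by
      by_cases hv20 : v2 = 0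
      · have hy0 : y = 0 := by
          have : |y| ≤ 0 := by rw [hB, hv20, abs_zero] at hyB; exact hyB
          exact abs_eq_zero.1 (le_antisymm this (abs_nonneg _))
        rw [hy0, hv20]; ring
      · rw [ht]; field_simp
    have ht1 : |t| ≤ 1 := by
      by_cases hv20 : v2 = 0
      · rw [ht, hv20, div_zero, abs_zero]; norm_num
      · rw [ht, abs_div, div_le_one (abs_pos.2 hv20)]
        exact le_trans hyB (le_of_eq hB)
    set s : ℝ := (x - t * v1) / r with hsdef
    have hsr : s * r = x - t * v1 := by rw [hsdef]; field_simp
    have hs3 : |s| ≤ 3 := by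
      rw [hsdef, abs_div, abs_of_pos hr0, div_le_iff₀ hr0]
      calc |x - t * v1| ≤ |x| + |t * v1| := abs_sub _ _
        _ ≤ (r + |v1|) + 1 * |v1| := by
            rw [abs_mul]
            exact add_le_add (le_trans hxA (le_of_eq hA))
              (mul_le_mul_of_nonneg_right ht1 (abs_nonneg _))
        _ ≤ r + r + r := by simp only [one_mul]; linarith [hv1r]
        _ = 3 * r := by ring
    refine ⟨s, abs_le.1 hs3, t, abs_le.1 (by linarith : |t| ≤ 3), ?_⟩
    have hq : rotInv u r (c + s • u + t • v) = q := by
      rw [rotInv_add, rotInv_add, rotInv_smul, rotInv_smul,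
        rotInv_u u r hrne hr2, hv, hc]
      have e1 : q.1 = c1 + (s * r + t * v1) := by rw [hsr, hx]; ring
      have e2 : q.2 = c2 + (s * 0 + t * v2) := by rw [htv2, hy]; ring
      apply Prod.ext
      · simp only [Prod.fst_add, Prod.smul_fst, smul_eq_mul]; rw [e1]; ring
      · simp only [Prod.snd_add, Prod.smul_snd, smul_eq_mul]; rw [e2]; ring
    rw [← hqp, ← hq, rot_rotInv θ u r hrne hr2 hcos hsin]

lemma cs_help (u v : ℝ × ℝ) (h : v.1 ^ 2 + v.2 ^ 2 ≤ u.1 ^ 2 + u.2 ^ 2) :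
    |v.1 * u.1 + v.2 * u.2| ≤ u.1 ^ 2 + u.2 ^ 2 := by
  rw [abs_le]
  constructor <;>
    nlinarith [sq_nonneg (u.1 + v.1), sq_nonneg (u.2 + v.2),
      sq_nonneg (u.1 - v.1), sq_nonneg (u.2 - v.2)]


theorem statement12 (L : (ℝ × ℝ) ≃ᵃ[ℝ] (ℝ × ℝ)) :
    ∃ T : Set (ℝ × ℝ), IsRectangle T ∧
      L '' (Set.Icc (0 : ℝ) 1 ×ˢ Set.Icc (0 : ℝ) 1) ⊆ T ∧
      T ⊆ (fun p => L (1 / 2, 1 / 2) + (3 : ℝ) • (p - L (1 / 2, 1 / 2))) ''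
        (L '' (Set.Icc (0 : ℝ) 1 ×ˢ Set.Icc (0 : ℝ) 1)) := by
  set c : ℝ × ℝ := L (1 / 2, 1 / 2) with hcdef
  set u : ℝ × ℝ := (1/2 : ℝ) • L.linear (1, 0) with hudef
  set v : ℝ × ℝ := (1/2 : ℝ) • L.linear (0, 1) with hvdef
  have hL : ∀ p : ℝ × ℝ, L p = c + (2 * p.1 - 1) • u + (2 * p.2 - 1) • v := by
    intro p
    have h1 := L.map_vadd ((1/2, 1/2) : ℝ × ℝ) (p - (1/2, 1/2))
    rw [vadd_eq_add, vadd_eq_add, sub_add_cancel] at h1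
    have h2 : p - ((1/2, 1/2) : ℝ × ℝ)
        = (p.1 - 1/2) • ((1, 0) : ℝ × ℝ) + (p.2 - 1/2) • ((0, 1) : ℝ × ℝ) := by
      simp [Prod.ext_iff]
    rw [h1, h2, map_add, _root_.map_smul, _root_.map_smul, hudef, hvdef, hcdef]
    module
  -- the parallelogram as a parametric set
  have hP : L '' (Set.Icc (0 : ℝ) 1 ×ˢ Set.Icc (0 : ℝ) 1)
      = {p | ∃ s ∈ Icc (-1:ℝ) 1, ∃ t ∈ Icc (-1:ℝ) 1, p = c + s • u + t • v} := by
    ext p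
    constructor
    · rintro ⟨q, ⟨hq1, hq2⟩, rfl⟩
      simp only [mem_Icc] at hq1 hq2
      exact ⟨2 * q.1 - 1, ⟨by linarith [hq1.1], by linarith [hq1.2]⟩,
        2 * q.2 - 1, ⟨by linarith [hq2.1], by linarith [hq2.2]⟩, hL q⟩
    · rintro ⟨s, hs, t, ht, rfl⟩
      refine ⟨((s + 1) / 2, (t + 1) / 2), ⟨?_, ?_⟩, ?_⟩
      · simp only [mem_Icc]; constructor <;> [linarith [hs.1]; linarith [hs.2]]
      · simp only [mem_Icc]; constructor <;> [linarith [ht.1]; linarith [ht.2]]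
      · rw [hL ((s + 1) / 2, (t + 1) / 2)]
        module
  have hD : (fun p => c + (3 : ℝ) • (p - c)) ''
        (L '' (Set.Icc (0 : ℝ) 1 ×ˢ Set.Icc (0 : ℝ) 1))
      = {p | ∃ s ∈ Icc (-3:ℝ) 3, ∃ t ∈ Icc (-3:ℝ) 3, p = c + s • u + t • v} := by
    rw [hP]
    ext p
    constructor
    · rintro ⟨q, ⟨s, hs, t, ht, rfl⟩, rfl⟩
      refine ⟨3 * s, ⟨by linarith [hs.1], by linarith [hs.2]⟩,
        3 * t, ⟨by linarith [ht.1], by linarith [ht.2]⟩, ?_⟩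
      show c + (3:ℝ) • (c + s • u + t • v - c) = c + (3 * s) • u + (3 * t) • v
      module
    · rintro ⟨s, hs, t, ht, rfl⟩
      refine ⟨c + (s/3) • u + (t/3) • v,
        ⟨s/3, ⟨by linarith [hs.1], by linarith [hs.2]⟩,
         t/3, ⟨by linarith [ht.1], by linarith [ht.2]⟩, rfl⟩, ?_⟩
      show c + (3:ℝ) • (c + (s/3) • u + (t/3) • v - c) = c + s • u + t • v
      module
  have hu0 : u ≠ 0 := by
    rw [hudef]
    simp only [ne_eq, smul_eq_zero, not_or]
    refine ⟨by norm_num, ?_⟩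
    intro hzz
    have : ((1, 0) : ℝ × ℝ) = 0 := L.linear.injective (by simpa using hzz)
    simp [Prod.ext_iff] at this
  have hv0 : v ≠ 0 := by
    rw [hvdef]
    simp only [ne_eq, smul_eq_zero, not_or]
    refine ⟨by norm_num, ?_⟩
    intro hzz
    have : ((0, 1) : ℝ × ℝ) = 0 := L.linear.injective (by simpa using hzz)
    simp [Prod.ext_iff] at this
  rcases le_total (v.1 ^ 2 + v.2 ^ 2) (u.1 ^ 2 + u.2 ^ 2) with hle | hle
  · obtain ⟨T, hT, h1, h2⟩ := para_rect c u v hu0 (cs_help u v hle)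
    refine ⟨T, hT, ?_, ?_⟩
    · rw [hP]; rintro p ⟨s, hs, t, ht, rfl⟩; exact h1 s t hs ht
    · rw [show (fun p => L (1/2, 1/2) + (3:ℝ) • (p - L (1/2,1/2)))
        = (fun p => c + (3:ℝ) • (p - c)) from rfl, hD]
      intro p hp
      exact h2 p hp
  · obtain ⟨T, hT, h1, h2⟩ := para_rect c v u hv0 (cs_help v u hle)
    refine ⟨T, hT, ?_, ?_⟩
    · rw [hP]; rintro p ⟨s, hs, t, ht, rfl⟩
      have := h1 t s ht hs
      rwa [show c + t • v + s • u = c + s • u + t • v by abel] at this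
    · rw [show (fun p => L (1/2, 1/2) + (3:ℝ) • (p - L (1/2,1/2)))
        = (fun p => c + (3:ℝ) • (p - c)) from rfl, hD]
      intro p hp
      obtain ⟨s, hs, t, ht, rfl⟩ := h2 p hp
      exact ⟨t, ht, s, hs, by abel⟩

end
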